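/- arXiv:1109.5386 — 3 statements merged into one kernel-verified Lean document; each statement's English description precedes it below -/
import Mathlib

section
/- For all z, w in the open unit disk 𝔻 ⊂ ℂ, ∫_{0}^{2π} (1 − |z|²)(1 − |w|²) / (|e^{iθ} − z|² · |e^{iθ} − w|²) dθ = 2π · (1 − |z·w|²) / |1 − z·conj(w)|². Consequently, Hadamard's variational formula is verified on the unit disk: the radial variation −(1/(2π))·(1 − |zw|²)/|1 − z·conj(w)|² of the Green function equals minus the boundary integral of the product of the two Poisson kernels P(z,θ) = (1/(2π))(1 − |z|²)/|e^{iθ} − z|² and P(w,θ), multiplied by 2π. -/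
open ComplexConjugate

/-- The Poisson kernel of the unit disk at `z ∈ 𝔻` and boundary point `e^{iθ}`. -/
noncomputable def poissonKernelDisk (z : ℂ) (θ : ℝ) : ℝ :=
  (1 / (2 * Real.pi)) *
    ((1 - ‖z‖ ^ 2) / ‖Complex.exp (θ * Complex.I) - z‖ ^ 2)

open Complex Metric Set intervalIntegral

noncomputable abbrev uc (θ : ℝ) : ℂ := Complex.exp (θ * Complex.I)

lemma uc_ne_zero (θ : ℝ) : uc θ ≠ 0 := Complex.exp_ne_zero _

lemma abs_uc (θ : ℝ) : ‖uc θ‖ = 1 := Complex.norm_exp_ofReal_mul_I θ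

lemma conj_uc (θ : ℝ) : conj (uc θ) = (uc θ)⁻¹ := by
  have h : uc θ * conj (uc θ) = 1 := by
    rw [Complex.mul_conj]
    norm_cast
    rw [← Complex.sq_norm, abs_uc]; norm_num
  field_simp [uc_ne_zero θ] at h ⊢
  linear_combination h

lemma continuous_uc : Continuous uc :=
  Complex.continuous_exp.comp (Complex.continuous_ofReal.mul continuous_const)

lemma uc_mem_cb (θ : ℝ) : uc θ ∈ closedBall (0:ℂ) 1 := by
  simp [Complex.dist_eq, abs_uc]

lemma sub_uc_ne {z : ℂ} (hz : ‖z‖ < 1) (θ : ℝ) : uc θ - z ≠ 0 := by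
  intro h
  rw [sub_eq_zero] at h
  rw [← h, abs_uc] at hz; exact lt_irrefl _ hz

lemma denom_ne {z v : ℂ} (hz : ‖z‖ < 1) (hv : v ∈ closedBall (0:ℂ) 1) :
    1 - conj z * v ≠ 0 := by
  intro h
  have h1 : ‖conj z * v‖ < 1 := by
    rw [norm_mul, Complex.norm_conj]
    calc ‖z‖ * ‖v‖ ≤ ‖z‖ * 1 := by
          refine mul_le_mul_of_nonneg_left ?_ (norm_nonneg z)
          simpa [Complex.dist_eq] using hv
      _ < 1 := by simpa using hz
  rw [sub_eq_zero] at h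
  rw [← h] at h1; simp at h1

lemma kernel_eq {z : ℂ} (hz : ‖z‖ < 1) (θ : ℝ) :
    uc θ * (uc θ - z)⁻¹ + uc θ * (conj z / (1 - conj z * uc θ)) =
      (((1 - ‖z‖ ^ 2) / ‖uc θ - z‖ ^ 2 : ℝ) : ℂ) := by
  have h1 : ((‖uc θ - z‖ : ℂ)) ^ 2 = (uc θ - z) * conj (uc θ - z) := by
    rw [← Complex.ofReal_pow, Complex.sq_norm]; push_cast [Complex.mul_conj]; ring
  have h2 : ((‖z‖ : ℂ)) ^ 2 = z * conj z := by
    rw [← Complex.ofReal_pow, Complex.sq_norm]; push_cast [Complex.mul_conj]; ring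
  have h3 : conj (uc θ - z) = (uc θ)⁻¹ - conj z := by rw [map_sub, conj_uc]
  have hne : (uc θ)⁻¹ - conj z ≠ 0 := by
    intro h
    apply denom_ne hz (uc_mem_cb θ)
    rw [sub_eq_zero] at h
    rw [← h, inv_mul_cancel₀ (uc_ne_zero θ), sub_self]
  have h4 : (uc θ - z) * ((uc θ)⁻¹ - conj z) =
      (uc θ - z) * (1 - conj z * uc θ) / uc θ := by
    rw [eq_div_iff (uc_ne_zero θ)]
    have hcu : (uc θ)⁻¹ * uc θ = 1 := inv_mul_cancel₀ (uc_ne_zero θ)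
    ring_nf
    linear_combination (uc θ - z) * hcu
  push_cast
  rw [h1, h3, h2, h4, div_div_eq_mul_div]
  have hX : (uc θ - z) * (1 - conj z * uc θ) ≠ 0 :=
    mul_ne_zero (sub_uc_ne hz θ) (denom_ne hz (uc_mem_cb θ))
  have hX2 : 1 - uc θ * conj z ≠ 0 := by rw [mul_comm]; exact denom_ne hz (uc_mem_cb θ)
  field_simp [sub_uc_ne hz θ, denom_ne hz (uc_mem_cb θ), hX2]
  ring

lemma poisson_repro (f : ℂ → ℂ) (hf : DifferentiableOn ℂ f (closedBall (0:ℂ) 1))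
    {z : ℂ} (hz : ‖z‖ < 1) :
    ∫ θ in (0:ℝ)..(2 * Real.pi),
        (((1 - ‖z‖ ^ 2) / ‖uc θ - z‖ ^ 2 : ℝ) : ℂ) * f (uc θ) =
      2 * Real.pi * f z := by
  have hzball : z ∈ ball (0:ℂ) 1 := by simpa [Complex.dist_eq] using hz
  have hfc : Continuous fun θ : ℝ => f (uc θ) :=
    hf.continuousOn.comp_continuous continuous_uc uc_mem_cb
  have hda : ∀ x ∈ ball (0:ℂ) 1 \ (∅ : Set ℂ), DifferentiableAt ℂ f x := by
    intro x hx
    exact (hf x (ball_subset_closedBall hx.1)).differentiableAt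
      (closedBall_mem_nhds_of_mem hx.1)
  have h1 : (∮ u in C(0, 1), (u - z)⁻¹ • f u) = (2 * Real.pi * Complex.I : ℂ) • f z :=
    Complex.circleIntegral_sub_inv_smul_of_differentiable_on_off_countable
      countable_empty hzball hf.continuousOn hda
  have h2 : (∮ u in C(0, 1), (conj z / (1 - conj z * u)) * f u) = 0 := by
    refine Complex.circleIntegral_eq_zero_of_differentiable_on_off_countable zero_le_one
      countable_empty ?_ ?_
    · refine ContinuousOn.mul ?_ hf.continuousOn
      refine ContinuousOn.div continuousOn_const ?_ ?_
      · exact (continuousOn_const.sub (continuousOn_const.mul continuousOn_id))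
      · intro v hv; exact denom_ne hz hv
    · intro x hx
      refine DifferentiableAt.mul ?_ (hda x hx)
      refine DifferentiableAt.div (differentiableAt_const _) ?_ ?_
      · exact (differentiableAt_const _).sub ((differentiableAt_const _).mul differentiableAt_id)
      · exact denom_ne hz (ball_subset_closedBall hx.1)
  rw [circleIntegral] at h1 h2
  simp only [deriv_circleMap, circleMap_zero, Complex.ofReal_one, one_mul, smul_eq_mul] at h1 h2
  have hg1 : IntervalIntegrable
      (fun θ : ℝ => uc θ * Complex.I * ((uc θ - z)⁻¹ * f (uc θ)))
      MeasureTheory.volume 0 (2 * Real.pi) := by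
    apply Continuous.intervalIntegrable
    exact (continuous_uc.mul continuous_const).mul
      (((continuous_uc.sub continuous_const).inv₀ (fun θ => sub_uc_ne hz θ)).mul hfc)
  have hg2 : IntervalIntegrable
      (fun θ : ℝ => uc θ * Complex.I * (conj z / (1 - conj z * uc θ) * f (uc θ)))
      MeasureTheory.volume 0 (2 * Real.pi) := by
    apply Continuous.intervalIntegrable
    exact (continuous_uc.mul continuous_const).mul
      ((continuous_const.div (continuous_const.sub (continuous_const.mul continuous_uc))
        (fun θ => denom_ne hz (uc_mem_cb θ))).mul hfc)
  have key : (∫ θ in (0:ℝ)..(2 * Real.pi),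
      (uc θ * Complex.I * ((uc θ - z)⁻¹ * f (uc θ)) +
        uc θ * Complex.I * (conj z / (1 - conj z * uc θ) * f (uc θ)))) =
      2 * Real.pi * Complex.I * f z := by
    rw [intervalIntegral.integral_add hg1 hg2, h1, h2, add_zero]
  have hI : (Complex.I : ℂ) ≠ 0 := Complex.I_ne_zero
  apply mul_left_cancel₀ hI
  rw [← intervalIntegral.integral_const_mul]
  have hcong : ∀ θ : ℝ,
      Complex.I * ((((1 - ‖z‖ ^ 2) / ‖uc θ - z‖ ^ 2 : ℝ) : ℂ) * f (uc θ)) =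
      uc θ * Complex.I * ((uc θ - z)⁻¹ * f (uc θ)) +
        uc θ * Complex.I * (conj z / (1 - conj z * uc θ) * f (uc θ)) := by
    intro θ
    have := kernel_eq hz θ
    calc Complex.I * ((((1 - ‖z‖ ^ 2) / ‖uc θ - z‖ ^ 2 : ℝ) : ℂ) * f (uc θ))
        = Complex.I * ((uc θ * (uc θ - z)⁻¹ + uc θ * (conj z / (1 - conj z * uc θ))) * f (uc θ)) := by
          rw [this]
      _ = _ := by ring
  rw [intervalIntegral.integral_congr (fun θ _ => hcong θ), key]
  ring

lemma interval_integral_conj {f : ℝ → ℂ} {a b : ℝ} :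
    (∫ θ in a..b, conj (f θ)) = conj (∫ θ in a..b, f θ) := by
  simp [intervalIntegral, ← integral_conj]

noncomputable def Fw (w : ℂ) : ℂ → ℂ := fun v => (1 + conj w * v) / (1 - conj w * v)

lemma Fw_diff {w : ℂ} (hw : ‖w‖ < 1) :
    DifferentiableOn ℂ (Fw w) (closedBall (0:ℂ) 1) := by
  refine DifferentiableOn.div ?_ ?_ ?_
  · exact (differentiableOn_const _).add ((differentiableOn_const _).mul differentiableOn_id)
  · exact (differentiableOn_const _).sub ((differentiableOn_const _).mul differentiableOn_id)
  · intro v hv; exact denom_ne hw hv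

lemma Fw_circle_re {w : ℂ} (hw : ‖w‖ < 1) (θ : ℝ) :
    (Fw w (uc θ) + conj (Fw w (uc θ))) / 2 =
      (((1 - ‖w‖ ^ 2) / ‖uc θ - w‖ ^ 2 : ℝ) : ℂ) := by
  have hu := uc_ne_zero θ
  have huw := sub_uc_ne hw θ
  have hden := denom_ne hw (uc_mem_cb θ)
  have hconjF : conj (Fw w (uc θ)) = (uc θ + w) / (uc θ - w) := by
    have e0 : conj (Fw w (uc θ)) = (1 + w * (uc θ)⁻¹) / (1 - w * (uc θ)⁻¹) := by
      simp [Fw, map_div₀, map_add, map_one, map_mul, Complex.conj_conj, conj_uc]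
    rw [e0]
    rw [div_eq_div_iff]
    · field_simp
    · intro h
      apply huw
      have : (1 - w * (uc θ)⁻¹) * uc θ = 0 := by rw [h, zero_mul]
      calc uc θ - w = (1 - w * (uc θ)⁻¹) * uc θ := by field_simp
        _ = 0 := this
    · exact huw
  have h1 : ((‖uc θ - w‖ : ℂ)) ^ 2 = (uc θ - w) * conj (uc θ - w) := by
    rw [← Complex.ofReal_pow, Complex.sq_norm]; push_cast [Complex.mul_conj]; ring
  have h2 : ((‖w‖ : ℂ)) ^ 2 = w * conj w := by
    rw [← Complex.ofReal_pow, Complex.sq_norm]; push_cast [Complex.mul_conj]; ring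
  have h3 : conj (uc θ - w) = (uc θ)⁻¹ - conj w := by rw [map_sub, conj_uc]
  have h4 : (uc θ - w) * ((uc θ)⁻¹ - conj w) =
      (uc θ - w) * (1 - conj w * uc θ) / uc θ := by
    rw [eq_div_iff hu]
    have hcu : (uc θ)⁻¹ * uc θ = 1 := inv_mul_cancel₀ hu
    linear_combination (uc θ - w) * hcu
  rw [Fw] at hconjF ⊢
  rw [hconjF]
  push_cast
  rw [h1, h3, h2, h4, div_div_eq_mul_div]
  field_simp
  ring

lemma final_alg {z w : ℂ} (hz : ‖z‖ < 1) (hw : ‖w‖ < 1) :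
    ((2 * Real.pi * ((1 - ‖z * w‖ ^ 2) / ‖1 - z * conj w‖ ^ 2) : ℝ) : ℂ)
      = Real.pi * (Fw w z + conj (Fw w z)) := by
  have hzcb : z ∈ closedBall (0:ℂ) 1 := by simp [Complex.dist_eq]; exact hz.le
  have hd1 : 1 - conj w * z ≠ 0 := denom_ne hw hzcb
  have hd2 : 1 - w * conj z ≠ 0 := by
    intro h
    apply hd1
    have : conj (1 - w * conj z) = 0 := by rw [h, map_zero]
    simpa [map_sub, map_mul, map_one, Complex.conj_conj, mul_comm] using this
  have hconjF : conj (Fw w z) = (1 + w * conj z) / (1 - w * conj z) := by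
    simp only [Fw, map_div₀, map_add, map_sub, map_one, map_mul, Complex.conj_conj]
  have h1 : ((‖z * w‖ : ℂ)) ^ 2 = z * w * (conj z * conj w) := by
    rw [← Complex.ofReal_pow, Complex.sq_norm, ← Complex.mul_conj, map_mul]
  have h2 : ((‖1 - z * conj w‖ : ℂ)) ^ 2 =
      (1 - z * conj w) * (1 - conj z * w) := by
    rw [← Complex.ofReal_pow, Complex.sq_norm, ← Complex.mul_conj]
    simp only [map_sub, map_mul, map_one, Complex.conj_conj]
  have hd3 : (1 : ℂ) - z * conj w ≠ 0 := by
    intro h; apply hd1; rw [← h]; ring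
  have hd4 : (1 : ℂ) - conj z * w ≠ 0 := by
    intro h; apply hd2; rw [← h]; ring
  rw [hconjF, Fw]
  push_cast
  rw [h1, h2]
  field_simp
  ring

/-- For `z, w ∈ 𝔻`,
`∫₀^{2π} (1−|z|²)(1−|w|²)/(|e^{iθ}−z|²|e^{iθ}−w|²) dθ = 2π (1−|zw|²)/|1−z·conj w|²`.
Consequently Hadamard's variational formula is verified on the unit disk: the radial
variation `−(1/(2π))(1−|zw|²)/|1−z·conj w|²` of the Green function equals minus the
boundary integral of the product of the two Poisson kernels. -/
theorem hadamard_disk_verification (z w : ℂ) (hz : z ∈ Metric.ball (0 : ℂ) 1)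
    (hw : w ∈ Metric.ball (0 : ℂ) 1) :
    (∫ θ in (0:ℝ)..(2 * Real.pi),
        ((1 - ‖z‖ ^ 2) * (1 - ‖w‖ ^ 2)) /
          (‖Complex.exp (θ * Complex.I) - z‖ ^ 2 *
            ‖Complex.exp (θ * Complex.I) - w‖ ^ 2)) =
      2 * Real.pi * ((1 - ‖z * w‖ ^ 2) / ‖1 - z * conj w‖ ^ 2) ∧
    -((1 / (2 * Real.pi)) *
        ((1 - ‖z * w‖ ^ 2) / ‖1 - z * conj w‖ ^ 2)) =
      -(∫ θ in (0:ℝ)..(2 * Real.pi), poissonKernelDisk z θ * poissonKernelDisk w θ) := by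
  have hz1 : ‖z‖ < 1 := by simpa [Complex.dist_eq] using hz
  have hw1 : ‖w‖ < 1 := by simpa [Complex.dist_eq] using hw
  have hF := Fw_diff hw1
  have hrep := poisson_repro (Fw w) hF hz1
  have hFc : Continuous fun θ : ℝ => Fw w (uc θ) :=
    hF.continuousOn.comp_continuous continuous_uc uc_mem_cb
  have hKc : Continuous fun θ : ℝ =>
      (((1 - ‖z‖ ^ 2) / ‖uc θ - z‖ ^ 2 : ℝ) : ℂ) := by
    refine Complex.continuous_ofReal.comp ?_
    refine Continuous.div continuous_const ?_ ?_
    · exact (continuous_norm.comp (continuous_uc.sub continuous_const)).pow 2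
    · intro θ
      exact pow_ne_zero 2 (norm_ne_zero_iff.mpr (sub_uc_ne hz1 θ))
  have hg1 : IntervalIntegrable
      (fun θ : ℝ => (((1 - ‖z‖ ^ 2) / ‖uc θ - z‖ ^ 2 : ℝ) : ℂ) * Fw w (uc θ))
      MeasureTheory.volume 0 (2 * Real.pi) :=
    (hKc.mul hFc).intervalIntegrable _ _
  have hg2 : IntervalIntegrable
      (fun θ : ℝ => (((1 - ‖z‖ ^ 2) / ‖uc θ - z‖ ^ 2 : ℝ) : ℂ) *
        conj (Fw w (uc θ)))
      MeasureTheory.volume 0 (2 * Real.pi) :=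
    (hKc.mul (continuous_conj.comp hFc)).intervalIntegrable _ _
  have hconjint : ∫ θ in (0:ℝ)..(2 * Real.pi),
      (((1 - ‖z‖ ^ 2) / ‖uc θ - z‖ ^ 2 : ℝ) : ℂ) * conj (Fw w (uc θ)) =
      2 * Real.pi * conj (Fw w z) := by
    have e : ∀ θ : ℝ,
        (((1 - ‖z‖ ^ 2) / ‖uc θ - z‖ ^ 2 : ℝ) : ℂ) * conj (Fw w (uc θ)) =
        conj ((((1 - ‖z‖ ^ 2) / ‖uc θ - z‖ ^ 2 : ℝ) : ℂ) * Fw w (uc θ)) := by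
      intro θ
      rw [map_mul, Complex.conj_ofReal]
    rw [intervalIntegral.integral_congr (fun θ _ => e θ), interval_integral_conj, hrep]
    rw [map_mul, map_mul, Complex.conj_ofReal, map_ofNat]
  -- the main complex computation
  have main : ((∫ θ in (0:ℝ)..(2 * Real.pi),
      ((1 - ‖z‖ ^ 2) * (1 - ‖w‖ ^ 2)) /
        (‖Complex.exp (θ * Complex.I) - z‖ ^ 2 *
          ‖Complex.exp (θ * Complex.I) - w‖ ^ 2) : ℝ) : ℂ) =
      Real.pi * (Fw w z + conj (Fw w z)) := by
    rw [← intervalIntegral.integral_ofReal]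
    have e : ∀ θ : ℝ, (((1 - ‖z‖ ^ 2) * (1 - ‖w‖ ^ 2) /
        (‖Complex.exp (θ * Complex.I) - z‖ ^ 2 *
          ‖Complex.exp (θ * Complex.I) - w‖ ^ 2) : ℝ) : ℂ) =
        (1 / 2 : ℂ) *
          ((((1 - ‖z‖ ^ 2) / ‖uc θ - z‖ ^ 2 : ℝ) : ℂ) * Fw w (uc θ) +
           (((1 - ‖z‖ ^ 2) / ‖uc θ - z‖ ^ 2 : ℝ) : ℂ) * conj (Fw w (uc θ))) := by
      intro θ
      have hre := Fw_circle_re hw1 θ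
      have : (1 / 2 : ℂ) *
          ((((1 - ‖z‖ ^ 2) / ‖uc θ - z‖ ^ 2 : ℝ) : ℂ) * Fw w (uc θ) +
           (((1 - ‖z‖ ^ 2) / ‖uc θ - z‖ ^ 2 : ℝ) : ℂ) * conj (Fw w (uc θ))) =
          (((1 - ‖z‖ ^ 2) / ‖uc θ - z‖ ^ 2 : ℝ) : ℂ) *
            ((Fw w (uc θ) + conj (Fw w (uc θ))) / 2) := by ring
      rw [this, hre]
      push_cast
      ring
    rw [intervalIntegral.integral_congr (fun θ _ => e θ),
      intervalIntegral.integral_const_mul, intervalIntegral.integral_add hg1 hg2, hrep, hconjint]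
    ring
  have first : (∫ θ in (0:ℝ)..(2 * Real.pi),
      ((1 - ‖z‖ ^ 2) * (1 - ‖w‖ ^ 2)) /
        (‖Complex.exp (θ * Complex.I) - z‖ ^ 2 *
          ‖Complex.exp (θ * Complex.I) - w‖ ^ 2)) =
      2 * Real.pi * ((1 - ‖z * w‖ ^ 2) / ‖1 - z * conj w‖ ^ 2) := by
    apply Complex.ofReal_injective
    rw [main, ← final_alg hz1 hw1]
  refine ⟨first, ?_⟩
  have h2 : (∫ θ in (0:ℝ)..(2 * Real.pi), poissonKernelDisk z θ * poissonKernelDisk w θ) =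
      (1 / (2 * Real.pi)) ^ 2 * ∫ θ in (0:ℝ)..(2 * Real.pi),
        ((1 - ‖z‖ ^ 2) * (1 - ‖w‖ ^ 2)) /
          (‖Complex.exp (θ * Complex.I) - z‖ ^ 2 *
            ‖Complex.exp (θ * Complex.I) - w‖ ^ 2) := by
    rw [← intervalIntegral.integral_const_mul]
    refine intervalIntegral.integral_congr fun θ _ => ?_
    simp only [poissonKernelDisk]
    rw [div_mul_div_comm]
    ring
  have hpi : (Real.pi : ℝ) ≠ 0 := Real.pi_ne_zero
  have hh : ((1 / (2 * Real.pi)) : ℝ) ^ 2 * (2 * Real.pi) = 1 / (2 * Real.pi) := by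
    field_simp
  rw [h2, first, ← mul_assoc, hh]
end

section
/- For all nonzero z, w in the open unit disk 𝔻 ⊂ ℂ, the Lebesgue area integral over 𝔻 of the function ξ ↦ 1/((1 − ξ·conj(w))·(1 − conj(ξ)·z)) equals −(π/(z·conj(w))) · log(1 − z·conj(w)), where log is the principal branch of the complex logarithm. -/
open ComplexConjugate

open Set MeasureTheory


lemma inner_circle (z w : ℂ) (hz : ‖z‖ < 1) (hw : ‖w‖ < 1)
    (r : ℝ) (hr0 : 0 < r) (hr1 : r < 1) :
    (∫ θ in Set.Ioo (-Real.pi) Real.pi,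
      1 / ((1 - circleMap 0 r θ * conj w) * (1 - conj (circleMap 0 r θ) * z))) =
    ((2 * Real.pi : ℝ) : ℂ) * (1 - (r : ℂ)^2 * (z * conj w))⁻¹ := by
  have hrw : ∀ ξ : ℂ, ‖ξ‖ ≤ r → 1 - ξ * conj w ≠ 0 := by
    intro ξ hξ h
    have : ‖(ξ * conj w)‖ < 1 := by
      rw [norm_mul, Complex.norm_conj]
      calc ‖ξ‖ * ‖w‖ ≤ r * ‖w‖ := by
            exact mul_le_mul_of_nonneg_right hξ (norm_nonneg _)
        _ < 1 := by nlinarith [norm_nonneg w]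
    have h1 : ξ * conj w = 1 := by linear_combination -h
    rw [h1] at this; simp at this
  -- the pole location
  have hmem : (r : ℂ)^2 * z ∈ Metric.ball (0 : ℂ) r := by
    simp only [Metric.mem_ball, Complex.dist_eq, sub_zero, norm_mul, norm_pow,
      Complex.norm_real, Real.norm_eq_abs, abs_of_pos hr0]
    nlinarith [norm_nonneg z]
  have hrz : ∀ ξ : ℂ, ‖ξ‖ ≤ r → 1 - conj ξ * z ≠ 0 := by
    intro ξ hξ h
    have : ‖(conj ξ * z)‖ < 1 := by
      rw [norm_mul, Complex.norm_conj]
      calc ‖ξ‖ * ‖z‖ ≤ r * ‖z‖ :=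
            mul_le_mul_of_nonneg_right hξ (norm_nonneg _)
        _ < 1 := by nlinarith [norm_nonneg z]
    have h1 : conj ξ * z = 1 := by linear_combination -h
    rw [h1] at this; simp at this
  have hf : DifferentiableOn ℂ (fun ξ => (1 - ξ * conj w)⁻¹) (Metric.closedBall 0 r) := by
    apply DifferentiableOn.inv
    · exact ((differentiable_const _).sub (differentiable_id.mul_const _)).differentiableOn
    · intro ξ hξ
      exact hrw ξ (by simpa [Complex.dist_eq] using hξ)
  have key := hf.circleIntegral_sub_inv_smul hmem
  rw [circleIntegral] at key
  have hptwise : ∀ θ : ℝ,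
      deriv (circleMap 0 r) θ • ((circleMap 0 r θ - (r : ℂ)^2 * z)⁻¹ •
        (1 - circleMap 0 r θ * conj w)⁻¹) =
      Complex.I * (1 / ((1 - circleMap 0 r θ * conj w) * (1 - conj (circleMap 0 r θ) * z))) := by
    intro θ
    set ξ := circleMap 0 r θ with hξdef
    have habs : ‖ξ‖ = r := by
      rw [hξdef, norm_circleMap_zero, abs_of_pos hr0]
    have hξ0 : ξ ≠ 0 := by
      intro h; rw [h] at habs; simp at habs; exact hr0.ne' habs.symm
    have hconj : conj ξ * ξ = (r : ℂ)^2 := by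
      rw [mul_comm, Complex.mul_conj, Complex.normSq_eq_norm_sq, habs]
      push_cast; ring
    have h1 : 1 - ξ * conj w ≠ 0 := hrw ξ habs.le
    have h2 : 1 - conj ξ * z ≠ 0 := hrz ξ habs.le
    have hfac : ξ - (r : ℂ)^2 * z = ξ * (1 - conj ξ * z) := by
      rw [mul_sub, mul_one, ← mul_assoc, mul_comm ξ (conj ξ), hconj]
    rw [deriv_circleMap, ← hξdef, smul_eq_mul, smul_eq_mul, hfac, mul_inv]
    field_simp
  simp only [hptwise] at key
  rw [intervalIntegral.integral_const_mul] at key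
  have hI : (∫ θ in (0:ℝ)..2*Real.pi,
      1 / ((1 - circleMap 0 r θ * conj w) * (1 - conj (circleMap 0 r θ) * z))) =
      ((2 * Real.pi : ℝ) : ℂ) * (1 - (r : ℂ)^2 * (z * conj w))⁻¹ := by
    apply mul_left_cancel₀ Complex.I_ne_zero
    rw [key, smul_eq_mul]
    push_cast; ring_nf
  have hper : Function.Periodic (fun θ =>
      1 / ((1 - circleMap 0 r θ * conj w) * (1 - conj (circleMap 0 r θ) * z))) (2 * Real.pi) :=
    fun θ => by simp only [periodic_circleMap 0 r θ]
  have hshift := hper.intervalIntegral_add_eq (-Real.pi) 0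
  rw [← integral_Ioc_eq_integral_Ioo,
    ← intervalIntegral.integral_of_le (by linarith [Real.pi_pos] : -Real.pi ≤ Real.pi)]
  calc (∫ θ in (-Real.pi)..Real.pi,
        1 / ((1 - circleMap 0 r θ * conj w) * (1 - conj (circleMap 0 r θ) * z)))
      = ∫ θ in (-Real.pi)..(-Real.pi + 2*Real.pi),
        1 / ((1 - circleMap 0 r θ * conj w) * (1 - conj (circleMap 0 r θ) * z)) := by
        congr 1; ring
    _ = ∫ θ in (0:ℝ)..(0 + 2*Real.pi),
        1 / ((1 - circleMap 0 r θ * conj w) * (1 - conj (circleMap 0 r θ) * z)) := hshift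
    _ = ((2 * Real.pi : ℝ) : ℂ) * (1 - (r : ℂ)^2 * (z * conj w))⁻¹ := by
        rw [zero_add] at *; exact hI


lemma outer_integral (a : ℂ) (ha : ‖a‖ < 1) (ha0 : a ≠ 0) :
    (∫ r in Set.Ioo (0:ℝ) 1, ((2 * Real.pi * r : ℝ) : ℂ) * (1 - (r : ℂ)^2 * a)⁻¹) =
      -((Real.pi : ℂ) / a) * Complex.log (1 - a) := by
  have hslit : ∀ r : ℝ, |r| ≤ 1 → (1 - (r : ℂ)^2 * a) ∈ Complex.slitPlane := by
    intro r hr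
    rw [Complex.mem_slitPlane_iff]
    left
    have h1 : ((1 : ℂ) - (r : ℂ)^2 * a).re = 1 - r^2 * a.re := by
      simp [Complex.sub_re, Complex.mul_re, ← Complex.ofReal_pow]
    rw [h1]
    have h2 := Complex.abs_re_le_norm a
    have h3 : -1 ≤ r ∧ r ≤ 1 := abs_le.mp hr
    have hr2 : r^2 ≤ 1 := by nlinarith [h3.1, h3.2]
    nlinarith [mul_nonneg (sq_nonneg r) (sub_nonneg.mpr (le_abs_self a.re)),
      mul_nonneg (sub_nonneg.mpr hr2) (abs_nonneg a.re)]
  have hne : ∀ r : ℝ, |r| ≤ 1 → (1 - (r : ℂ)^2 * a) ≠ 0 :=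
    fun r hr => Complex.slitPlane_ne_zero (hslit r hr)
  have hderiv : ∀ r ∈ Set.uIcc (0:ℝ) 1,
      HasDerivAt (fun s : ℝ => (-((Real.pi : ℂ) / a)) * Complex.log (1 - (s : ℂ)^2 * a))
        (((2 * Real.pi * r : ℝ) : ℂ) * (1 - (r : ℂ)^2 * a)⁻¹) r := by
    intro r hr
    rw [Set.uIcc_of_le zero_le_one] at hr
    have hr' : |r| ≤ 1 := abs_le.mpr ⟨by linarith [hr.1], hr.2⟩
    have h1 : HasDerivAt (fun u : ℂ => 1 - u^2 * a) (-(2 * (r : ℂ) * a)) (r : ℂ) := by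
      have := ((hasDerivAt_pow 2 (r : ℂ)).mul_const a).const_sub 1
      refine this.congr_deriv ?_
      push_cast; ring
    have h2 : HasDerivAt Complex.log (1 - (r : ℂ)^2 * a)⁻¹ (1 - (r : ℂ)^2 * a) :=
      Complex.hasDerivAt_log (hslit r hr')
    have h3 := (h2.comp (r : ℂ) h1).const_mul (-((Real.pi : ℂ) / a))
    have h4 := h3.comp_ofReal
    refine h4.congr_deriv ?_
    have h5 : (1 - (r : ℂ)^2 * a) ≠ 0 := hne r hr'
    field_simp [ha0, h5]
    push_cast; ring
  have hcont : ContinuousOn (fun r : ℝ => ((2 * Real.pi * r : ℝ) : ℂ) * (1 - (r : ℂ)^2 * a)⁻¹)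
      (Set.uIcc (0:ℝ) 1) := by
    apply ContinuousOn.mul
    · fun_prop
    · apply ContinuousOn.inv₀
      · fun_prop
      · intro r hr
        rw [Set.uIcc_of_le zero_le_one] at hr
        exact hne r (abs_le.mpr ⟨by linarith [hr.1], hr.2⟩)
  have hint := intervalIntegral.integral_eq_sub_of_hasDerivAt hderiv
    (hcont.intervalIntegrable)
  rw [← integral_Ioc_eq_integral_Ioo, ← intervalIntegral.integral_of_le zero_le_one, hint]
  norm_num [Complex.log_one]


lemma one_sub_mul_ne (u v : ℂ) (hu : ‖u‖ ≤ 1) (hv : ‖v‖ < 1) :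
    1 - u * v ≠ 0 := by
  intro h
  have h1 : u * v = 1 := by linear_combination -h
  have : ‖(u * v)‖ < 1 := by
    rw [norm_mul]
    calc ‖u‖ * ‖v‖ ≤ 1 * ‖v‖ :=
          mul_le_mul_of_nonneg_right hu (norm_nonneg _)
      _ < 1 := by simpa using hv
  rw [h1] at this; simp at this


/-- For nonzero `z, w` in the open unit disk,
`∫_𝔻 1/((1 − ξ·conj w)(1 − conj(ξ)·z)) dA(ξ) = −(π/(z·conj w)) log(1 − z·conj w)`,
with the principal branch of the logarithm. -/
theorem area_integral_szego_type (z w : ℂ) (hz : z ∈ Metric.ball (0 : ℂ) 1)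
    (hw : w ∈ Metric.ball (0 : ℂ) 1) (hz0 : z ≠ 0) (hw0 : w ≠ 0) :
    (∫ ξ in Metric.ball (0 : ℂ) 1, 1 / ((1 - ξ * conj w) * (1 - conj ξ * z))) =
      -((Real.pi : ℂ) / (z * conj w)) * Complex.log (1 - z * conj w) := by
  have haz : ‖z‖ < 1 := by simpa [Complex.dist_eq] using hz
  have haw : ‖w‖ < 1 := by simpa [Complex.dist_eq] using hw
  set G : ℂ → ℂ := fun ξ => 1 / ((1 - ξ * conj w) * (1 - conj ξ * z)) with hGdef
  set S : Set (ℝ × ℝ) := Set.Ioo (0:ℝ) 1 ×ˢ Set.Ioo (-Real.pi) Real.pi with hSdef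
  have hS : MeasurableSet S := (measurableSet_Ioo.prod measurableSet_Ioo)
  have hTeq : polarCoord.target = Set.Ioi (0:ℝ) ×ˢ Set.Ioo (-Real.pi) Real.pi := rfl
  have hT : MeasurableSet polarCoord.target := by
    rw [hTeq]; exact measurableSet_Ioi.prod measurableSet_Ioo
  -- Step 1: polar coordinates
  have step1 : (∫ ξ in Metric.ball (0 : ℂ) 1, G ξ) =
      ∫ p in S, p.1 • G (Complex.polarCoord.symm p) := by
    rw [← integral_indicator measurableSet_ball,
      ← Complex.integral_comp_polarCoord_symm (Set.indicator (Metric.ball 0 1) G),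
      ← integral_indicator hT, ← integral_indicator hS]
    congr 1
    funext p
    by_cases hp : p ∈ S
    · have hp1 : p ∈ polarCoord.target := by
        rw [hTeq]; exact ⟨hp.1.1, hp.2⟩
      have hball : Complex.polarCoord.symm p ∈ Metric.ball (0 : ℂ) 1 := by
        simp only [Metric.mem_ball, Complex.dist_eq, sub_zero, Complex.norm_polarCoord_symm]
        rw [abs_of_pos hp.1.1]
        exact hp.1.2
      rw [Set.indicator_of_mem hp1, Set.indicator_of_mem hp,
        Set.indicator_of_mem hball]
    · rw [Set.indicator_of_notMem hp]
      by_cases hp1 : p ∈ polarCoord.target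
      · rw [Set.indicator_of_mem hp1]
        rw [hTeq] at hp1
        have hge : (1:ℝ) ≤ p.1 := by
          by_contra hlt
          exact hp ⟨⟨hp1.1, not_le.mp hlt⟩, hp1.2⟩
        have : Complex.polarCoord.symm p ∉ Metric.ball (0 : ℂ) 1 := by
          simp only [Metric.mem_ball, Complex.dist_eq, sub_zero, Complex.norm_polarCoord_symm,
            not_lt]
          rw [abs_of_pos hp1.1]
          exact hge
        rw [Set.indicator_of_notMem this, smul_zero]
      · rw [Set.indicator_of_notMem hp1]
  -- continuity / integrability
  have hGcont : ContinuousOn G (Metric.closedBall (0:ℂ) 1) := by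
    apply ContinuousOn.div continuousOn_const
    · apply ContinuousOn.mul
      · exact (continuous_const.sub (continuous_id.mul continuous_const)).continuousOn
      · exact (continuous_const.sub (Complex.continuous_conj.mul continuous_const)).continuousOn
    · intro ξ hξ
      have hξ1 : ‖ξ‖ ≤ 1 := by
        simpa [Complex.dist_eq] using hξ
      refine mul_ne_zero (one_sub_mul_ne ξ (conj w) hξ1 (by simpa using haw)) ?_
      exact one_sub_mul_ne (conj ξ) z (by simpa using hξ1) haz
  have hsymm_cont : Continuous (fun p : ℝ × ℝ => Complex.polarCoord.symm p) := by
    simp only [Complex.polarCoord_symm_apply]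
    fun_prop
  have hF : ContinuousOn (fun p : ℝ × ℝ => p.1 • G (Complex.polarCoord.symm p))
      (Set.Icc (0:ℝ) 1 ×ˢ Set.Icc (-Real.pi) Real.pi) := by
    apply ContinuousOn.smul (continuous_fst.continuousOn)
    apply hGcont.comp hsymm_cont.continuousOn
    intro p hp
    simp only [Metric.mem_closedBall, Complex.dist_eq, sub_zero, Complex.norm_polarCoord_symm]
    rw [abs_of_nonneg hp.1.1]
    exact hp.1.2
  have hInt : IntegrableOn (fun p : ℝ × ℝ => p.1 • G (Complex.polarCoord.symm p)) S := by
    apply (hF.integrableOn_compact (isCompact_Icc.prod isCompact_Icc)).mono_set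
    exact Set.prod_mono Set.Ioo_subset_Icc_self Set.Ioo_subset_Icc_self
  -- Fubini
  have step2 : (∫ p in S, p.1 • G (Complex.polarCoord.symm p)) =
      ∫ r in Set.Ioo (0:ℝ) 1, ∫ θ in Set.Ioo (-Real.pi) Real.pi,
        r • G (Complex.polarCoord.symm (r, θ)) := by
    rw [hSdef, Measure.volume_eq_prod]
    apply setIntegral_prod
    rw [← Measure.volume_eq_prod]
    exact hInt
  have ha : ‖(z * conj w)‖ < 1 := by
    rw [norm_mul, Complex.norm_conj]
    nlinarith [norm_nonneg z, norm_nonneg w]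
  have ha0 : z * conj w ≠ 0 := mul_ne_zero hz0 (by simpa using hw0)
  have step3 : ∀ r ∈ Set.Ioo (0:ℝ) 1,
      (∫ θ in Set.Ioo (-Real.pi) Real.pi, r • G (Complex.polarCoord.symm (r, θ))) =
      ((2 * Real.pi * r : ℝ) : ℂ) * (1 - (r:ℂ)^2 * (z * conj w))⁻¹ := by
    intro r hr
    have hsymm : ∀ θ : ℝ, Complex.polarCoord.symm (r, θ) = circleMap 0 r θ := by
      intro θ
      simp [circleMap, Complex.exp_mul_I, Complex.polarCoord_symm_apply,
        Complex.ofReal_cos, Complex.ofReal_sin]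
    simp only [hsymm]
    rw [integral_smul, hGdef]
    rw [inner_circle z w haz haw r hr.1 hr.2, Complex.real_smul]
    push_cast; ring
  calc (∫ ξ in Metric.ball (0 : ℂ) 1, G ξ)
      = ∫ r in Set.Ioo (0:ℝ) 1, ∫ θ in Set.Ioo (-Real.pi) Real.pi,
          r • G (Complex.polarCoord.symm (r, θ)) := by rw [step1, step2]
    _ = ∫ r in Set.Ioo (0:ℝ) 1,
          ((2 * Real.pi * r : ℝ) : ℂ) * (1 - (r:ℂ)^2 * (z * conj w))⁻¹ :=
        setIntegral_congr_fun measurableSet_Ioo step3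
    _ = -((Real.pi : ℂ) / (z * conj w)) * Complex.log (1 - z * conj w) :=
        outer_integral (z * conj w) ha ha0
end

section
/- For every z in the open unit disk 𝔻 ⊂ ℂ, the real part of (1/(4π²)) times the Lebesgue area integral over 𝔻 of ξ ↦ ξ/(ξ − z) + conj(z)·ξ/(1 − conj(z)·ξ) equals (1 − |z|²)/(4π). (This is the first variation δg(z,0) of the Green function of 𝔻 for the Laplace–Beltrami operator ∇λ∇ with λ(ξ) = 1 + ε|ξ|², evaluated at pole w = 0.) -/
open ComplexConjugate


open MeasureTheory Set Real Complex
set_option maxHeartbeats 1000000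

lemma integrableOn_comp_polarCoord_symm_iff {E : Type*} [NormedAddCommGroup E]
    [NormedSpace ℝ E] (f : ℝ × ℝ → E) :
    IntegrableOn (fun p => p.1 • f (polarCoord.symm p)) polarCoord.target ↔ Integrable f := by
  set B : ℝ × ℝ → ℝ × ℝ →L[ℝ] ℝ × ℝ := fun p =>
    LinearMap.toContinuousLinearMap (Matrix.toLin (Module.Basis.finTwoProd ℝ) (Module.Basis.finTwoProd ℝ)
      !![Real.cos p.2, -p.1 * Real.sin p.2; Real.sin p.2, p.1 * Real.cos p.2])
  have A : ∀ p ∈ polarCoord.target, HasFDerivWithinAt polarCoord.symm (B p) polarCoord.target p :=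
    fun p _ => (hasFDerivAt_polarCoord_symm p).hasFDerivWithinAt
  have B_det : ∀ p, (B p).det = p.1 := by
    intro p
    conv_rhs => rw [← one_mul p.1, ← Real.cos_sq_add_sin_sq p.2]
    simp only [B, neg_mul, LinearMap.det_toContinuousLinearMap, LinearMap.det_toLin,
      Matrix.det_fin_two_of, sub_neg_eq_add]
    ring
  have hinj : InjOn polarCoord.symm polarCoord.target := polarCoord.symm.injOn
  have himg : polarCoord.symm '' polarCoord.target = polarCoord.source :=
    polarCoord.symm_image_target_eq_source
  have h1 : Integrable f volume ↔ IntegrableOn f polarCoord.source volume := by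
    unfold IntegrableOn
    rw [Measure.restrict_congr_set polarCoord_source_ae_eq_univ, Measure.restrict_univ]
  rw [h1, ← himg,
    integrableOn_image_iff_integrableOn_abs_det_fderiv_smul volume
      polarCoord.open_target.measurableSet A hinj f]
  apply integrableOn_congr_fun _ polarCoord.open_target.measurableSet
  intro p hp
  simp only [B_det, abs_of_pos (show 0 < p.1 from hp.1)]

lemma integrableOn_comp_complex_polarCoord_symm_iff {E : Type*} [NormedAddCommGroup E]
    [NormedSpace ℝ E] (f : ℂ → E) :
    IntegrableOn (fun p : ℝ × ℝ => p.1 • f (Complex.polarCoord.symm p)) polarCoord.target ↔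
      Integrable f := by
  have h : (fun p : ℝ × ℝ => p.1 • f (Complex.polarCoord.symm p)) =
      fun p : ℝ × ℝ => p.1 • (f ∘ Complex.measurableEquivRealProd.symm) (polarCoord.symm p) := rfl
  rw [h, integrableOn_comp_polarCoord_symm_iff (f ∘ Complex.measurableEquivRealProd.symm),
    ← (Complex.volume_preserving_equiv_real_prod.symm).integrable_comp_emb
      Complex.measurableEquivRealProd.symm.measurableEmbedding]

lemma integrableOn_inv_norm_ball (R : ℝ) :
    IntegrableOn (fun ξ : ℂ => ‖ξ‖⁻¹) (Metric.ball 0 R) := by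
  rw [← integrable_indicator_iff measurableSet_ball,
    ← integrableOn_comp_complex_polarCoord_symm_iff]
  have hmeas : MeasurableSet (Ioo (0:ℝ) R ×ˢ Ioo (-π) π) :=
    measurableSet_Ioo.prod measurableSet_Ioo
  apply Integrable.mono' (g := (Ioo (0:ℝ) R ×ˢ Ioo (-π) π).indicator fun _ => (1:ℝ))
  · refine (integrable_indicator_iff hmeas).2 (integrableOn_const (ne_of_lt ?_))
    refine lt_of_le_of_lt (Measure.restrict_apply_le _ _) ?_
    rw [Measure.volume_eq_prod, Measure.prod_prod]
    exact ENNReal.mul_lt_top measure_Ioo_lt_top measure_Ioo_lt_top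
  · have hsymm : Measurable (fun p : ℝ × ℝ => Complex.polarCoord.symm p) := by
      have hc : Continuous fun p : ℝ × ℝ =>
          (p.1 : ℂ) * (Real.cos p.2 + Real.sin p.2 * Complex.I) := by fun_prop
      simpa only [Complex.polarCoord_symm_apply] using hc.measurable
    have hg : Measurable ((Metric.ball (0:ℂ) R).indicator fun ξ : ℂ => ‖ξ‖⁻¹) :=
      (measurable_inv.comp measurable_norm).indicator measurableSet_ball
    exact (measurable_fst.smul (hg.comp hsymm)).aestronglyMeasurable
  · rw [ae_restrict_iff' polarCoord.open_target.measurableSet]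
    refine Filter.Eventually.of_forall fun p hp => ?_
    have hp1 : 0 < p.1 := hp.1
    have habs : ‖Complex.polarCoord.symm p‖ = p.1 := by
      rw [Complex.norm_polarCoord_symm, abs_of_pos hp1]
    by_cases hR : p.1 < R
    · have hmem : Complex.polarCoord.symm p ∈ Metric.ball (0:ℂ) R := by
        rw [Metric.mem_ball, dist_zero_right] at *
        rw [show ‖Complex.polarCoord.symm p‖ = p.1 from habs]; exact hR
      rw [indicator_of_mem hmem]
      have : p.1 • (‖Complex.polarCoord.symm p‖)⁻¹ = 1 := by
        rw [habs, smul_eq_mul, mul_inv_cancel₀ hp1.ne']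
      rw [this, indicator_of_mem (by exact ⟨⟨hp1, hR⟩, hp.2⟩), norm_one]
    · have hmem : Complex.polarCoord.symm p ∉ Metric.ball (0:ℂ) R := by
        rw [Metric.mem_ball, dist_zero_right, habs]
        exact fun h => hR h
      rw [indicator_of_notMem hmem, smul_zero, norm_zero]
      exact indicator_apply_nonneg fun _ => zero_le_one

open ComplexConjugate in
lemma integrableOn_main (z : ℂ) (hz : z ∈ Metric.ball (0 : ℂ) 1) :
    IntegrableOn (fun ξ : ℂ => ξ / (ξ - z) + conj z * ξ / (1 - conj z * ξ))
      (Metric.ball 0 1) := by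
  have hz1 : ‖z‖ < 1 := by
    simpa [Complex.dist_eq] using hz
  -- integrability of ‖ξ - z‖⁻¹ on the ball
  have h2 : Integrable ((Metric.ball (0:ℂ) 2).indicator fun ξ : ℂ => ‖ξ‖⁻¹) :=
    (integrable_indicator_iff measurableSet_ball).2 (integrableOn_inv_norm_ball 2)
  have h3 : Integrable fun ξ : ℂ =>
      ((Metric.ball (0:ℂ) 2).indicator fun ξ : ℂ => ‖ξ‖⁻¹) (ξ - z) := h2.comp_sub_right z
  have hsub : IntegrableOn (fun ξ : ℂ => ‖ξ - z‖⁻¹) (Metric.ball 0 1) := by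
    refine (h3.integrableOn).congr_fun ?_ measurableSet_ball
    intro ξ hξ
    have hmem : ξ - z ∈ Metric.ball (0:ℂ) 2 := by
      rw [Metric.mem_ball, dist_zero_right] at hξ ⊢
      calc ‖ξ - z‖ ≤ ‖ξ‖ + ‖z‖ := norm_sub_le _ _
        _ < 2 := by
          have : ‖z‖ < 1 := by simpa using hz1
          linarith
    simp [indicator_of_mem hmem]
  refine Integrable.mono' (g := fun ξ : ℂ => ‖ξ - z‖⁻¹ + (1 - ‖z‖)⁻¹)
    (hsub.add (integrableOn_const measure_ball_lt_top.ne)) ?_ ?_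
  · apply Measurable.aestronglyMeasurable
    fun_prop
  · rw [ae_restrict_iff' measurableSet_ball]
    refine Filter.Eventually.of_forall fun ξ hξ => ?_
    have hξ1 : ‖ξ‖ < 1 := by simpa [Complex.dist_eq] using hξ
    have hden : (1 : ℝ) - ‖z‖ ≤ ‖1 - conj z * ξ‖ := by
      have h1 : ‖conj z * ξ‖ ≤ ‖z‖ := by
        rw [norm_mul, Complex.norm_conj]
        nlinarith [norm_nonneg z, norm_nonneg ξ]
      calc (1:ℝ) - ‖z‖ ≤ 1 - ‖conj z * ξ‖ := by linarith
        _ ≤ ‖1 - conj z * ξ‖ := by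
          simpa using norm_sub_norm_le (1 : ℂ) (conj z * ξ)
    refine (norm_add_le _ _).trans (add_le_add ?_ ?_)
    · rw [norm_div, div_eq_mul_inv]
      have : ‖ξ‖ ≤ 1 := by simpa using hξ1.le
      exact mul_le_of_le_one_left (inv_nonneg.2 (norm_nonneg _)) this
    · have hpos : (0:ℝ) < 1 - ‖z‖ := by linarith
      rw [norm_div, inv_eq_one_div]
      apply div_le_div₀ zero_le_one ?_ hpos ?_
      · rw [norm_mul, Complex.norm_conj]
        nlinarith [norm_nonneg z, norm_nonneg ξ]
      · simpa using hden

open ComplexConjugate in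
lemma circle_slice (z : ℂ) (hz1 : ‖z‖ < 1) {r : ℝ} (hr0 : 0 < r) (hr1 : r < 1)
    (hrz : r ≠ ‖z‖) :
    (∫ θ in Set.Ioo (-π) π,
        (circleMap 0 r θ / (circleMap 0 r θ - z) +
          conj z * circleMap 0 r θ / (1 - conj z * circleMap 0 r θ))) =
      if ‖z‖ < r then ((2 * π : ℝ) : ℂ) else 0 := by
  set F : ℂ → ℂ := fun ξ => ξ / (ξ - z) + conj z * ξ / (1 - conj z * ξ) with hF
  set g : ℂ → ℂ := fun ξ =>
    (Complex.I * (ξ - z))⁻¹ + conj z * (Complex.I * (1 - conj z * ξ))⁻¹ with hg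
  have key : ∀ ξ : ℂ, (ξ * Complex.I) * g ξ = F ξ := by
    intro ξ
    simp only [hg, hF, mul_add, mul_inv, div_eq_mul_inv, Complex.inv_I]
    ring_nf
    simp [Complex.I_sq]
  -- step 1 : set integral over Ioo = interval integral
  have step1 : (∫ θ in Set.Ioo (-π) π, F (circleMap 0 r θ)) =
      ∫ θ in (-π)..π, F (circleMap 0 r θ) := by
    rw [intervalIntegral.integral_of_le (by linarith [Real.pi_pos]),
      Measure.restrict_congr_set Ioo_ae_eq_Ioc]
  -- step 2 : periodic shift to 0..2π
  have hper : Function.Periodic (fun θ => F (circleMap 0 r θ)) (2 * π) :=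
    (periodic_circleMap 0 r).comp F
  have step2 : (∫ θ in (-π)..π, F (circleMap 0 r θ)) =
      ∫ θ in (0:ℝ)..(2*π), F (circleMap 0 r θ) := by
    have := hper.intervalIntegral_add_eq (-π) 0
    simpa [show -π + 2*π = π by ring] using this
  -- step 3 : equals circle integral of g
  have step3 : (∫ θ in (0:ℝ)..(2*π), F (circleMap 0 r θ)) = ∮ ξ in C(0, r), g ξ := by
    rw [circleIntegral]
    refine intervalIntegral.integral_congr fun θ _ => ?_
    rw [deriv_circleMap, smul_eq_mul, key]
  have hsphere : ∀ ξ ∈ Metric.sphere (0:ℂ) r, ξ - z ≠ 0 := by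
    intro ξ hξ
    rw [mem_sphere_iff_norm, sub_zero] at hξ
    intro h
    rw [sub_eq_zero] at h
    apply hrz
    rw [← hξ, h]
  have hone : ∀ ξ : ℂ, ‖ξ‖ ≤ r → (1 : ℂ) - conj z * ξ ≠ 0 := by
    intro ξ hξ h
    have : ‖conj z * ξ‖ < 1 := by
      rw [norm_mul, Complex.norm_conj]
      nlinarith [norm_nonneg z, norm_nonneg ξ]
    rw [sub_eq_zero] at h
    rw [← h] at this
    simp at this
  -- second part of g has zero circle integral
  have hsecond : (∮ ξ in C(0, r), conj z * (Complex.I * (1 - conj z * ξ))⁻¹) = 0 := by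
    apply circleIntegral_eq_zero_of_differentiable_on_off_countable hr0.le Set.countable_empty
    · apply ContinuousOn.mul continuousOn_const
      apply ContinuousOn.inv₀ (by fun_prop)
      intro ξ hξ
      simp only [Metric.mem_closedBall, dist_zero_right] at hξ
      exact mul_ne_zero Complex.I_ne_zero (hone ξ hξ)
    · intro ξ hξ
      apply DifferentiableAt.const_mul
      apply DifferentiableAt.inv (by fun_prop)
      refine mul_ne_zero Complex.I_ne_zero (hone ξ ?_)
      have := hξ.1
      simp only [Metric.mem_ball, dist_zero_right] at this
      exact this.le
  have hcont1 : ContinuousOn (fun ξ : ℂ => (Complex.I * (ξ - z))⁻¹) (Metric.sphere 0 r) := by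
    apply ContinuousOn.inv₀ (by fun_prop)
    exact fun ξ hξ => mul_ne_zero Complex.I_ne_zero (hsphere ξ hξ)
  have hcont2 : ContinuousOn (fun ξ : ℂ => conj z * (Complex.I * (1 - conj z * ξ))⁻¹)
      (Metric.sphere 0 r) := by
    apply ContinuousOn.mul continuousOn_const
    apply ContinuousOn.inv₀ (by fun_prop)
    intro ξ hξ
    rw [mem_sphere_iff_norm, sub_zero] at hξ
    exact mul_ne_zero Complex.I_ne_zero
      (hone ξ (by rw [hξ]))
  have hsplit : (∮ ξ in C(0, r), g ξ) =
      (∮ ξ in C(0, r), (Complex.I * (ξ - z))⁻¹) +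
        ∮ ξ in C(0, r), conj z * (Complex.I * (1 - conj z * ξ))⁻¹ := by
    have hgint : CircleIntegrable g 0 r :=
      ((hcont1.add hcont2).congr (fun ξ _ => rfl)).circleIntegrable hr0.le
    have h1int : CircleIntegrable (fun ξ : ℂ => (Complex.I * (ξ - z))⁻¹) 0 r :=
      hcont1.circleIntegrable hr0.le
    have hdiff : (∮ ξ in C(0, r), (g ξ - (Complex.I * (ξ - z))⁻¹)) =
        (∮ ξ in C(0, r), g ξ) - ∮ ξ in C(0, r), (Complex.I * (ξ - z))⁻¹ :=
      circleIntegral.integral_sub hgint h1int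
    have hcongr2 : (∮ ξ in C(0, r), (g ξ - (Complex.I * (ξ - z))⁻¹)) =
        ∮ ξ in C(0, r), conj z * (Complex.I * (1 - conj z * ξ))⁻¹ :=
      circleIntegral.integral_congr hr0.le fun ξ _ => by simp [hg]
    rw [hcongr2] at hdiff
    linear_combination -hdiff
  have hfirst : (∮ ξ in C(0, r), (Complex.I * (ξ - z))⁻¹) =
      if ‖z‖ < r then ((2 * π : ℝ) : ℂ) else 0 := by
    have hcongr : (∮ ξ in C(0, r), (Complex.I * (ξ - z))⁻¹) =
        ∮ ξ in C(0, r), Complex.I⁻¹ * (ξ - z)⁻¹ :=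
      circleIntegral.integral_congr hr0.le fun ξ _ => mul_inv _ _
    rw [hcongr, circleIntegral.integral_const_mul]
    by_cases h : ‖z‖ < r
    · rw [if_pos h, circleIntegral.integral_sub_inv_of_mem_ball
        (by simpa [Metric.mem_ball, Complex.dist_eq] using h)]
      rw [Complex.inv_I]
      push_cast
      ring_nf
      simp [Complex.I_sq]
    · rw [if_neg h]
      have hzr : r < ‖z‖ := lt_of_le_of_ne (not_lt.1 h) hrz
      have hz0 : (∮ ξ in C(0, r), (ξ - z)⁻¹) = 0 := by
        apply circleIntegral_eq_zero_of_differentiable_on_off_countable hr0.le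
          Set.countable_empty
        · apply ContinuousOn.inv₀ (by fun_prop)
          intro ξ hξ
          rw [Metric.mem_closedBall, dist_zero_right] at hξ
          rw [sub_ne_zero]
          intro h'
          rw [h'] at hξ
          exact absurd hξ (not_le.2 hzr)
        · intro ξ hξ
          apply DifferentiableAt.inv (by fun_prop)
          have := hξ.1
          rw [Metric.mem_ball, dist_zero_right] at this
          rw [sub_ne_zero]
          intro h'
          rw [h'] at this
          exact absurd this.le (not_le.2 hzr)
      rw [hz0, mul_zero]
  rw [show (∫ θ in Set.Ioo (-π) π,
        (circleMap 0 r θ / (circleMap 0 r θ - z) +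
          conj z * circleMap 0 r θ / (1 - conj z * circleMap 0 r θ))) =
      ∫ θ in Set.Ioo (-π) π, F (circleMap 0 r θ) from rfl,
    step1, step2, step3, hsplit, hsecond, hfirst, add_zero]


/-- For `z` in the open unit disk, the real part of
`(1/(4π²)) ∫_𝔻 (ξ/(ξ−z) + conj(z)ξ/(1−conj(z)ξ)) dA(ξ)` equals `(1−|z|²)/(4π)`.
This is the first variation `δg(z,0)` of the Green function of `𝔻` for the
Laplace–Beltrami operator `∇λ∇` with `λ(ξ) = 1 + ε|ξ|²`, at pole `w = 0`. -/
theorem beltrami_variation_at_origin (z : ℂ) (hz : z ∈ Metric.ball (0 : ℂ) 1) :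
    ((1 / (4 * (Real.pi : ℂ) ^ 2)) *
        ∫ ξ in Metric.ball (0 : ℂ) 1,
          (ξ / (ξ - z) + conj z * ξ / (1 - conj z * ξ))).re =
      (1 - ‖z‖ ^ 2) / (4 * Real.pi) := by

  have hz1 : ‖z‖ < 1 := by simpa [Complex.dist_eq] using hz
  set F : ℂ → ℂ := fun ξ => ξ / (ξ - z) + conj z * ξ / (1 - conj z * ξ) with hF
  have hmain : (∫ ξ in Metric.ball (0 : ℂ) 1, F ξ) =
      ((π * (1 - ‖z‖ ^ 2) : ℝ) : ℂ) := by
    rw [← integral_indicator measurableSet_ball,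
      ← Complex.integral_comp_polarCoord_symm ((Metric.ball (0:ℂ) 1).indicator F)]
    have hEq : EqOn (fun p : ℝ × ℝ => p.1 • (Metric.ball (0:ℂ) 1).indicator F
        (Complex.polarCoord.symm p))
        ((Iio (1:ℝ) ×ˢ (univ : Set ℝ)).indicator
          (fun p : ℝ × ℝ => p.1 • F (Complex.polarCoord.symm p)))
        polarCoord.target := by
      intro p hp
      have hp1 : 0 < p.1 := hp.1
      have habs : ‖Complex.polarCoord.symm p‖ = p.1 := by
        rw [Complex.norm_polarCoord_symm, abs_of_pos hp1]
      by_cases h : p.1 < 1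
      · have hmem : Complex.polarCoord.symm p ∈ Metric.ball (0:ℂ) 1 := by
          rw [Metric.mem_ball, dist_zero_right, habs]; exact h
        simp only [indicator_of_mem hmem,
          indicator_of_mem (show p ∈ Iio (1:ℝ) ×ˢ (univ : Set ℝ) from ⟨h, trivial⟩)]
      · have hmem : Complex.polarCoord.symm p ∉ Metric.ball (0:ℂ) 1 := by
          rw [Metric.mem_ball, dist_zero_right, habs]; exact h
        simp only [indicator_of_notMem hmem,
          indicator_of_notMem (show p ∉ Iio (1:ℝ) ×ˢ (univ : Set ℝ) from fun hc => h hc.1),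
          smul_zero]
    rw [setIntegral_congr_fun polarCoord.open_target.measurableSet hEq,
      setIntegral_indicator (measurableSet_Iio.prod MeasurableSet.univ)]
    have hset : polarCoord.target ∩ (Iio (1:ℝ) ×ˢ (univ : Set ℝ)) =
        Ioo (0:ℝ) 1 ×ˢ Ioo (-π) π := by
      rw [polarCoord_target, prod_inter_prod, inter_univ, Ioi_inter_Iio]
    rw [hset]
    -- integrability on the product set
    have hFind : Integrable ((Metric.ball (0:ℂ) 1).indicator F) :=
      (integrable_indicator_iff measurableSet_ball).2 (integrableOn_main z hz)
    have hprodInt : IntegrableOn (fun p : ℝ × ℝ => p.1 • F (Complex.polarCoord.symm p))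
        (Ioo (0:ℝ) 1 ×ˢ Ioo (-π) π) := by
      have h1 : IntegrableOn (fun p : ℝ × ℝ =>
          p.1 • (Metric.ball (0:ℂ) 1).indicator F (Complex.polarCoord.symm p))
          polarCoord.target :=
        (integrableOn_comp_complex_polarCoord_symm_iff _).2 hFind
      have h2 := h1.mono_set (show Ioo (0:ℝ) 1 ×ˢ Ioo (-π) π ⊆ polarCoord.target by
        rw [← hset]; exact inter_subset_left)
      refine h2.congr_fun ?_ (measurableSet_Ioo.prod measurableSet_Ioo)
      intro p hp
      have hmem : Complex.polarCoord.symm p ∈ Metric.ball (0:ℂ) 1 := by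
        rw [Metric.mem_ball, dist_zero_right,
          Complex.norm_polarCoord_symm, abs_of_pos hp.1.1]
        exact hp.1.2
      simp only [indicator_of_mem hmem]
    rw [Measure.volume_eq_prod] at hprodInt
    rw [Measure.volume_eq_prod]
    rw [setIntegral_prod _ hprodInt]
    -- inner integral evaluation
    have hinner : ∀ r ∈ Ioo (0:ℝ) 1, r ≠ ‖z‖ →
        (∫ θ in Ioo (-π) π, ((r, θ) : ℝ × ℝ).1 • F (Complex.polarCoord.symm (r, θ))) =
          (Ioi (‖z‖)).indicator (fun s : ℝ => ((2 * π * s : ℝ) : ℂ)) r := by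
      intro r hr hrz
      have hsym : ∀ θ : ℝ, Complex.polarCoord.symm (r, θ) = circleMap 0 r θ := by
        intro θ
        simp [Complex.polarCoord_symm_apply, circleMap, Complex.exp_mul_I,
          ← Complex.ofReal_cos, ← Complex.ofReal_sin]
      simp only [hsym, smul_eq_mul]
      rw [show (fun θ : ℝ => ((r, θ) : ℝ × ℝ).1 • F (circleMap 0 r θ)) =
        (fun θ : ℝ => (r : ℂ) • F (circleMap 0 r θ)) from ?_]
      · rw [integral_smul, hF, circle_slice z hz1 hr.1 hr.2 hrz]
        by_cases h : ‖z‖ < r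
        · rw [if_pos h, indicator_of_mem (mem_Ioi.2 h), smul_eq_mul]
          push_cast
          ring
        · rw [if_neg h, indicator_of_notMem (by simpa using h), smul_zero]
      · funext θ
        simp [Complex.real_smul]
    have hae : ∀ᵐ r : ℝ, r ≠ ‖z‖ := by
      refine ae_iff.2 ?_
      simpa [not_not, setOf_eq_eq_singleton'] using Real.volume_singleton
    rw [setIntegral_congr_ae measurableSet_Ioo
      (by filter_upwards [hae] with r hr hrmem; exact hinner r hrmem hr)]
    rw [setIntegral_indicator measurableSet_Ioi]
    have hset2 : Ioo (0:ℝ) 1 ∩ Ioi (‖z‖) = Ioo (‖z‖) 1 := by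
      rw [inter_comm, Ioi_inter_Ioo, max_eq_left (norm_nonneg z)]
    rw [hset2]
    have hreal : (∫ r in Ioo (‖z‖) 1, 2 * π * r) = π * (1 - ‖z‖ ^ 2) := by
      rw [Measure.restrict_congr_set Ioo_ae_eq_Ioc,
        ← intervalIntegral.integral_of_le hz1.le]
      rw [intervalIntegral.integral_const_mul, integral_id]
      ring
    rw [← hreal]
    exact integral_ofReal
  rw [hmain]
  have : (1 / (4 * (Real.pi : ℂ) ^ 2)) * ((π * (1 - ‖z‖ ^ 2) : ℝ) : ℂ) =
      (((1 - ‖z‖ ^ 2) / (4 * π) : ℝ) : ℂ) := by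
    push_cast
    have hπ : (Real.pi : ℂ) ≠ 0 := Complex.ofReal_ne_zero.2 Real.pi_ne_zero
    field_simp
  rw [this, Complex.ofReal_re]
end
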